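/- arXiv:1509.01813 — 2 statements merged into one kernel-verified Lean document; each statement's English description precedes it below -/
import Mathlib

section
/- Kashiwara-type submodule correspondence: Let N be a left D_{n-1}-module and set M = N ⊗_K H^1_{(x_n)}(K[x_n]), a left D_n-module where D_n = D_{n-1} ⊗_K D_1. Then L ↦ L ⊗_K H^1_{(x_n)}(K[x_n]) is an inclusion-preserving bijection between the D_{n-1}-submodules of N and the D_n-submodules of M. In particular, length_{D_n} M = length_{D_{n-1}} N. -/
open Polynomial MvPolynomial

/-- Defining relations of the `n`-th Weyl algebra over `K`:
generators `Sum.inl i` are the multiplication operators `x_i`, generators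
`Sum.inr i` are the partial derivations `∂_i`. -/
inductive WeylRel (K : Type) [Field K] (n : ℕ) :
    FreeAlgebra K (Fin n ⊕ Fin n) → FreeAlgebra K (Fin n ⊕ Fin n) → Prop
  | xx (i j : Fin n) : WeylRel K n
      (FreeAlgebra.ι K (Sum.inl i) * FreeAlgebra.ι K (Sum.inl j))
      (FreeAlgebra.ι K (Sum.inl j) * FreeAlgebra.ι K (Sum.inl i))
  | dd (i j : Fin n) : WeylRel K n
      (FreeAlgebra.ι K (Sum.inr i) * FreeAlgebra.ι K (Sum.inr j))
      (FreeAlgebra.ι K (Sum.inr j) * FreeAlgebra.ι K (Sum.inr i))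
  | dx (i j : Fin n) : WeylRel K n
      (FreeAlgebra.ι K (Sum.inr i) * FreeAlgebra.ι K (Sum.inl j))
      (FreeAlgebra.ι K (Sum.inl j) * FreeAlgebra.ι K (Sum.inr i)
        + if i = j then 1 else 0)

/-- The `n`-th Weyl algebra `D_n` over `K`. -/
abbrev Weyl (K : Type) [Field K] (n : ℕ) : Type := RingQuot (WeylRel K n)

/-- The operator `x_i ∈ D_n`. -/
noncomputable def wX (K : Type) [Field K] (n : ℕ) (i : Fin n) : Weyl K n :=
  RingQuot.mkAlgHom K (WeylRel K n) (FreeAlgebra.ι K (Sum.inl i))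

/-- The operator `∂_i ∈ D_n`. -/
noncomputable def wD (K : Type) [Field K] (n : ℕ) (i : Fin n) : Weyl K n :=
  RingQuot.mkAlgHom K (WeylRel K n) (FreeAlgebra.ι K (Sum.inr i))

/-- The Bernstein filtration on the Weyl algebra: `F_k(D_n)` is spanned by the
monomials `x^α ∂^β` with `|α| + |β| ≤ k`. -/
noncomputable def bernsteinF (K : Type) [Field K] (n : ℕ) (k : ℤ) :
    Submodule K (Weyl K n) :=
  Submodule.span K {w | ∃ α β : Fin n → ℕ,
    ((∑ i, α i : ℕ) + (∑ i, β i : ℕ) : ℤ) ≤ k ∧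
    w = ((List.finRange n).map fun i => wX K n i ^ α i).prod *
        ((List.finRange n).map fun i => wD K n i ^ β i).prod}

/-- A good Bernstein filtration on a left `D_n`-module `M`. -/
structure GoodFiltration (K : Type) [Field K] (n : ℕ) (M : Type)
    [AddCommGroup M] [Module K M] [Module (Weyl K n) M]
    [IsScalarTower K (Weyl K n) M] (F : ℤ → Submodule K M) : Prop where
  mono : ∀ k, F k ≤ F (k + 1)
  exhaustive : ∀ m : M, ∃ k, m ∈ F k
  compat : ∀ j k : ℤ, ∀ w ∈ bernsteinF K n j, ∀ m ∈ F k, w • m ∈ F (j + k)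
  bddBelow : ∃ k₀ : ℤ, ∀ k < k₀, F k = ⊥
  finiteDim : ∀ k, FiniteDimensional K (F k)
  good : ∃ k₁ : ℤ, ∀ k ≥ k₁, ∀ j ≥ (0 : ℤ),
    F (j + k) ≤ Submodule.span K
      {m | ∃ w ∈ bernsteinF K n j, ∃ v ∈ F k, m = w • v}

/-- `HasMult K n M m` : the holonomic module `M` admits a good Bernstein filtration
whose Hilbert polynomial `h` satisfies `(deg h)! · (leading coeff of h) = m`; i.e.
the multiplicity of `M` is `m`. -/
def HasMult (K : Type) [Field K] (n : ℕ) (M : Type)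
    [AddCommGroup M] [Module K M] [Module (Weyl K n) M]
    [IsScalarTower K (Weyl K n) M] (m : ℚ) : Prop :=
  ∃ F : ℤ → Submodule K M, GoodFiltration K n M F ∧
    ∃ h : Polynomial ℚ,
      (∃ N : ℤ, ∀ k ≥ N, (Module.finrank K (F k) : ℚ) = h.eval (k : ℚ)) ∧
      m = (Nat.factorial h.natDegree : ℚ) * h.leadingCoeff

/-- `M` is a holonomic left `D_n`-module. -/
def IsHolonomic (K : Type) [Field K] (n : ℕ) (M : Type)
    [AddCommGroup M] [Module K M] [Module (Weyl K n) M]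
    [IsScalarTower K (Weyl K n) M] : Prop :=
  Subsingleton M ∨
  ∃ F : ℤ → Submodule K M, GoodFiltration K n M F ∧
    ∃ h : Polynomial ℚ,
      (∃ N : ℤ, ∀ k ≥ N, (Module.finrank K (F k) : ℚ) = h.eval (k : ℚ)) ∧
      h.natDegree = n

/-- The length of a module: the Krull dimension of its lattice of submodules. -/
noncomputable def mlength (A : Type) [Ring A] (M : Type) [AddCommGroup M]
    [Module A M] : WithBot ℕ∞ :=
  Order.krullDim (Submodule A M)

section LocalCoh
variable (K : Type) [Field K] (n : ℕ)

/-- The zero set in `K^n` of a polynomial. -/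
def zeroSet (p : MvPolynomial (Fin n) K) : Set (Fin n → K) :=
  {x | MvPolynomial.eval x p = 0}

/-- The property that a given `D_n`-module structure on the localization
`R[f⁻¹]` is the natural one: `x_i` acts by multiplication and `∂_i` acts as the
(unique) derivation of `R[f⁻¹]` extending `∂/∂x_i` on `R`. -/
def NatActs (f : MvPolynomial (Fin n) K)
    [Module (Weyl K n) (Localization.Away f)] : Prop :=
  (∀ (i : Fin n) (m : Localization.Away f),
      wX K n i • m =
        algebraMap (MvPolynomial (Fin n) K) (Localization.Away f)
          (MvPolynomial.X i) * m) ∧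
  (∀ i : Fin n, ∃ δ : Derivation K (Localization.Away f) (Localization.Away f),
      (∀ m, wD K n i • m = δ m) ∧
      ∀ r : MvPolynomial (Fin n) K,
        δ (algebraMap (MvPolynomial (Fin n) K) (Localization.Away f) r) =
          algebraMap (MvPolynomial (Fin n) K) (Localization.Away f)
            (MvPolynomial.pderiv i r))

/-- The first local cohomology module `H¹_{(f)}(R) = R[f⁻¹]/R` as a left
`D_n`-module. -/
noncomputable abbrev H1 (f : MvPolynomial (Fin n) K)
    [Module (Weyl K n) (Localization.Away f)] : Type :=
  (Localization.Away f) ⧸ Submodule.span (Weyl K n)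
    (Set.range (algebraMap (MvPolynomial (Fin n) K) (Localization.Away f)))

end LocalCoh

section Arrangement
open scoped Classical
variable (K : Type) [Field K] (n : ℕ)

/-- The intersection poset of an arrangement `𝒜` of hyperplanes inside the
ambient affine subspace `V0`: all nonempty intersections of subfamilies
(including the ambient space `V0` itself, as the empty intersection). -/
noncomputable def interPoset (V0 : Set (Fin n → K))
    (𝒜 : Finset (Set (Fin n → K))) : Finset (Set (Fin n → K)) :=
  (𝒜.powerset.image fun S => V0 ∩ ⋂ H ∈ S, H).filter fun X => X ≠ ∅

/-- Codimension of `X` inside the ambient affine subspace `V0`. -/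
noncomputable def codim (V0 X : Set (Fin n → K)) : ℕ :=
  Module.finrank K (vectorSpan K V0) - Module.finrank K (vectorSpan K X)

/-- `μ` is the Möbius function of the intersection poset of `𝒜` (with ambient
space `V0`), for the order `X ≤ Y ↔ X ⊇ Y`. -/
def IsMobius (V0 : Set (Fin n → K)) (𝒜 : Finset (Set (Fin n → K)))
    (μ : Set (Fin n → K) → ℤ) : Prop :=
  μ V0 = 1 ∧
  ∀ Y ∈ interPoset K n V0 𝒜, Y ≠ V0 →
    ∑ Z ∈ (interPoset K n V0 𝒜).filter fun Z => Y ⊆ Z, μ Z = 0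

/-- The Poincaré polynomial `π(𝒜,t) = ∑_{X ∈ L(𝒜)} μ(X)(−t)^{codim X}`. -/
noncomputable def poin (V0 : Set (Fin n → K)) (𝒜 : Finset (Set (Fin n → K)))
    (μ : Set (Fin n → K) → ℤ) : Polynomial ℤ :=
  ∑ X ∈ interPoset K n V0 𝒜, Polynomial.C (μ X) * (- Polynomial.X) ^ codim K n V0 X

end Arrangement

section Tensor
open TensorProduct

/-- `H¹_{(x)}(K[x]) = K[x,x⁻¹]/K[x]`, as a module over `K[x]`. -/
noncomputable abbrev Qmod (K : Type) [Field K] : Type :=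
  (Localization.Away (Polynomial.X : Polynomial K)) ⧸
    Submodule.span (Polynomial K)
      (Set.range (algebraMap (Polynomial K)
        (Localization.Away (Polynomial.X : Polynomial K))))

variable (K : Type) [Field K] (n' : ℕ) (N : Type) [AddCommGroup N] [Module K N]
  [Module (Weyl K n') N] [Module (Weyl K (n' + 1)) (N ⊗[K] Qmod K)]

/-- The natural `D_{n'+1} = D_{n'} ⊗ D_1`-module structure on
`N ⊗_K H¹_{(x_{n'+1})}(K[x_{n'+1}])` for a `D_{n'}`-module `N`: the first `n'`
pairs of generators act through `N`, the last variable acts by multiplication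
on the second factor and the last derivation acts through the derivative on the
second factor. -/
def TensorNatActs : Prop :=
  (∀ (i : Fin n') (a : N) (b : Qmod K),
    wX K (n' + 1) i.castSucc • (a ⊗ₜ[K] b) = (wX K n' i • a) ⊗ₜ[K] b) ∧
  (∀ (i : Fin n') (a : N) (b : Qmod K),
    wD K (n' + 1) i.castSucc • (a ⊗ₜ[K] b) = (wD K n' i • a) ⊗ₜ[K] b) ∧
  (∀ (a : N) (b : Qmod K),
    wX K (n' + 1) (Fin.last n') • (a ⊗ₜ[K] b) =
      a ⊗ₜ[K] ((Polynomial.X : Polynomial K) • b)) ∧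
  (∃ δ : Derivation K (Localization.Away (Polynomial.X : Polynomial K))
      (Localization.Away (Polynomial.X : Polynomial K)),
    (∀ p : Polynomial K,
      δ (algebraMap (Polynomial K) (Localization.Away (Polynomial.X : Polynomial K)) p) =
        algebraMap (Polynomial K) (Localization.Away (Polynomial.X : Polynomial K))
          (Polynomial.derivative p)) ∧
    ∀ (a : N) (c : Localization.Away (Polynomial.X : Polynomial K)),
      wD K (n' + 1) (Fin.last n') • (a ⊗ₜ[K] (Submodule.Quotient.mk c : Qmod K)) =
        a ⊗ₜ[K] (Submodule.Quotient.mk (δ c) : Qmod K))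

end Tensor


section KashiwaraAux

lemma weyl_adjoin (K : Type) [Field K] (n : ℕ) :
    Algebra.adjoin K (Set.range (wX K n) ∪ Set.range (wD K n)) = ⊤ := by
  have h1 : Algebra.adjoin K (Set.range (FreeAlgebra.ι K : (Fin n ⊕ Fin n) → _)) = ⊤ :=
    FreeAlgebra.adjoin_range_ι K _
  have h2 : Function.Surjective (RingQuot.mkAlgHom K (WeylRel K n)) :=
    RingQuot.mkAlgHom_surjective K (WeylRel K n)
  have h3 := AlgHom.map_adjoin (RingQuot.mkAlgHom K (WeylRel K n))
    (Set.range (FreeAlgebra.ι K : (Fin n ⊕ Fin n) → _))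
  rw [h1, Algebra.map_top, (AlgHom.range_eq_top _).mpr h2] at h3
  rw [h3]
  congr 1
  rw [Set.image_eq_range]
  ext w
  constructor
  · rintro (⟨i, rfl⟩ | ⟨i, rfl⟩)
    · exact ⟨⟨FreeAlgebra.ι K (Sum.inl i), ⟨Sum.inl i, rfl⟩⟩, rfl⟩
    · exact ⟨⟨FreeAlgebra.ι K (Sum.inr i), ⟨Sum.inr i, rfl⟩⟩, rfl⟩
  · rintro ⟨⟨_, (i | i), rfl⟩, rfl⟩
    · exact Or.inl ⟨i, rfl⟩
    · exact Or.inr ⟨i, rfl⟩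

lemma weyl_smul_mem {K : Type} [Field K] {n : ℕ} {M : Type} [AddCommGroup M] [Module K M]
    [Module (Weyl K n) M] [IsScalarTower K (Weyl K n) M]
    (S : Submodule K M)
    (hX : ∀ i, ∀ m ∈ S, wX K n i • m ∈ S)
    (hD : ∀ i, ∀ m ∈ S, wD K n i • m ∈ S) :
    ∀ w : Weyl K n, ∀ m ∈ S, w • m ∈ S := by
  let T : Subalgebra K (Weyl K n) :=
    { carrier := {w | ∀ m ∈ S, w • m ∈ S}
      mul_mem' := fun ha hb m hm => by rw [mul_smul]; exact ha _ (hb _ hm)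
      one_mem' := fun m hm => by simpa using hm
      add_mem' := fun ha hb m hm => by rw [add_smul]; exact S.add_mem (ha _ hm) (hb _ hm)
      algebraMap_mem' := fun c m hm => by rw [algebraMap_smul]; exact S.smul_mem c hm }
  have hT : ⊤ ≤ T := by
    rw [← weyl_adjoin K n]
    apply Algebra.adjoin_le
    rintro w (⟨i, rfl⟩ | ⟨i, rfl⟩)
    · exact hX i
    · exact hD i
  exact fun w => hT (Set.mem_univ w)


section Qfacts
variable (K : Type) [Field K]

local notation "Loc" => Localization.Away (Polynomial.X : Polynomial K)
local notation "alg" => algebraMap (Polynomial K) (Localization.Away (Polynomial.X : Polynomial K))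

noncomputable def iX : Localization.Away (Polynomial.X : Polynomial K) :=
  IsLocalization.Away.invSelf (S := Localization.Away (Polynomial.X : Polynomial K))
    (Polynomial.X : Polynomial K)

lemma algX_mul_iX : alg Polynomial.X * iX K = 1 :=
  IsLocalization.Away.mul_invSelf (S := Localization.Away (Polynomial.X : Polynomial K)) (Polynomial.X : Polynomial K)

-- sanity: instances
example : IsScalarTower K (Polynomial K) Loc := inferInstance

noncomputable def qe (k : ℕ) : Qmod K :=
  Submodule.Quotient.mk (iX K ^ (k + 1))

lemma alg_injective : Function.Injective (alg) :=
  IsLocalization.injective _ (powers_le_nonZeroDivisors_of_noZeroDivisors (X_ne_zero))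

lemma mk_alg (p : Polynomial K) :
    (Submodule.Quotient.mk (alg p) : Qmod K) = 0 :=
  (Submodule.Quotient.mk_eq_zero _).mpr (Submodule.subset_span ⟨p, rfl⟩)

lemma X_smul_qe_zero : (Polynomial.X : Polynomial K) • qe K 0 = 0 := by
  rw [qe, ← Submodule.Quotient.mk_smul, Algebra.smul_def, pow_one, algX_mul_iX]
  simpa using mk_alg K 1

lemma X_smul_qe_succ (k : ℕ) : (Polynomial.X : Polynomial K) • qe K (k + 1) = qe K k := by
  rw [qe, ← Submodule.Quotient.mk_smul, Algebra.smul_def, qe]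
  congr 1
  rw [pow_succ' (iX K) (k+1), ← mul_assoc, algX_mul_iX, one_mul]

lemma delta_iX_pow (δ : Derivation K Loc Loc)
    (hδ : ∀ p : Polynomial K, δ (alg p) = alg (derivative p)) (k : ℕ) :
    δ (iX K ^ (k + 1)) = -((k + 1 : ℕ) • iX K ^ (k + 2)) := by
  have h1 : δ (alg Polynomial.X) = 1 := by rw [hδ]; simp
  have h2 : δ (iX K) = -(iX K * iX K) := by
    have h0 : δ (alg Polynomial.X * iX K) = 0 := by rw [algX_mul_iX]; simp
    rw [Derivation.leibniz] at h0
    rw [h1, smul_eq_mul, smul_eq_mul, mul_one] at h0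
    -- h0 : alg X * δ iX + iX = 0
    have := congrArg (fun z => iX K * z) h0
    simp only [mul_add, ← mul_assoc, mul_zero] at this
    rw [mul_comm (iX K) (alg Polynomial.X), algX_mul_iX, one_mul] at this
    linear_combination this
  rw [Derivation.leibniz_pow, h2]
  rw [smul_eq_mul]  -- iX^k • (-(iX*iX))? smul of Loc on Loc
  have : k + 1 - 1 = k := rfl
  rw [this]
  ring_nf

lemma span_alg_eq : Submodule.span (Polynomial K) (Set.range (alg)) =
    LinearMap.range (Algebra.linearMap (Polynomial K) Loc) := by
  have h : Set.range (alg) =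
      (LinearMap.range (Algebra.linearMap (Polynomial K) Loc) : Set Loc) := by
    ext z; simp [Algebra.linearMap_apply]
  rw [h]
  exact Submodule.span_eq _

lemma qe_zero_ne : qe K 0 ≠ 0 := by
  rw [qe, Ne, Submodule.Quotient.mk_eq_zero, span_alg_eq]
  rintro ⟨p, hp⟩
  simp only [Algebra.linearMap_apply, zero_add, pow_one] at hp
  have h1 : alg (Polynomial.X * p) = alg 1 := by
    rw [map_mul, hp, algX_mul_iX, map_one]
  have h2 := alg_injective K h1
  have := congrArg (fun q => Polynomial.coeff q 0) h2
  simp [Polynomial.mul_coeff_zero] at this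

lemma algX_mul_iX_pow (m : ℕ) : alg Polynomial.X * iX K ^ (m + 1) = iX K ^ m := by
  rw [pow_succ' (iX K) m, ← mul_assoc, algX_mul_iX, one_mul]

lemma smul_eq_algC_mul (a : K) (v : Loc) : a • v = alg (Polynomial.C a) * v := by
  rw [← Polynomial.algebraMap_eq, ← IsScalarTower.algebraMap_apply, Algebra.smul_def]

lemma mk_mem_span_qe (c : Loc) :
    (Submodule.Quotient.mk c : Qmod K) ∈ Submodule.span K (Set.range (qe K)) := by
  have key : ∀ (m : ℕ) (p : Polynomial K),
      (Submodule.Quotient.mk (alg p * iX K ^ m) : Qmod K) ∈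
        Submodule.span K (Set.range (qe K)) := by
    intro m
    induction m with
    | zero => intro p; rw [pow_zero, mul_one, mk_alg]; exact zero_mem _
    | succ m ih =>
      intro p
      have hsplit : alg p * iX K ^ (m + 1) =
          alg p.divX * iX K ^ m + p.coeff 0 • iX K ^ (m + 1) := by
        conv_lhs => rw [← Polynomial.X_mul_divX_add p]
        rw [map_add, map_mul, add_mul, smul_eq_algC_mul]
        congr 1
        rw [mul_assoc, mul_left_comm, algX_mul_iX_pow]
      rw [hsplit, Submodule.Quotient.mk_add, Submodule.Quotient.mk_smul]
      exact add_mem (ih p.divX)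
        (Submodule.smul_mem _ _ (Submodule.subset_span ⟨m, rfl⟩))
  obtain ⟨⟨p, m⟩, hpm⟩ : ∃ pm : Polynomial K × ℕ, c * alg (Polynomial.X ^ pm.2) = alg pm.1 :=
    ⟨IsLocalization.Away.sec Polynomial.X c, IsLocalization.Away.sec_spec Polynomial.X c⟩
  have hc : c = alg p * iX K ^ m := by
    have h1 : alg (Polynomial.X ^ m) * iX K ^ m = 1 := by
      rw [map_pow, ← mul_pow, algX_mul_iX, one_pow]
    calc c = c * (alg (Polynomial.X ^ m) * iX K ^ m) := by rw [h1, mul_one]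
    _ = c * alg (Polynomial.X ^ m) * iX K ^ m := by ring
    _ = alg p * iX K ^ m := by rw [hpm]
  rw [hc]
  exact key m p

set_option synthInstance.maxHeartbeats 1000000 in
lemma exists_piQ : ∃ π : Qmod K →ₗ[K] K, π (qe K 0) = 1 := by
  obtain ⟨c, hc⟩ := Submodule.exists_isCompl (K ∙ qe K 0)
  refine ⟨(LinearEquiv.toSpanNonzeroSingleton K (Qmod K) (qe K 0)
      (qe_zero_ne K)).symm.toLinearMap ∘ₗ Submodule.linearProjOfIsCompl _ c hc, ?_⟩
  have h1 : Submodule.linearProjOfIsCompl _ c hc (qe K 0) =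
      ⟨qe K 0, Submodule.mem_span_singleton_self _⟩ :=
    Submodule.linearProjOfIsCompl_apply_left hc ⟨qe K 0, Submodule.mem_span_singleton_self _⟩
  rw [LinearMap.comp_apply, LinearEquiv.coe_coe, h1, LinearEquiv.symm_apply_eq]
  exact (LinearEquiv.toSpanNonzeroSingleton_one K (Qmod K) (qe K 0) (qe_zero_ne K)).symm

end Qfacts


lemma qe_deriv (K : Type) [Field K]
    (δ : Derivation K (Localization.Away (Polynomial.X : Polynomial K))
      (Localization.Away (Polynomial.X : Polynomial K)))
    (hδ : ∀ p : Polynomial K,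
      δ (algebraMap (Polynomial K) (Localization.Away (Polynomial.X : Polynomial K)) p) =
        algebraMap (Polynomial K) (Localization.Away (Polynomial.X : Polynomial K))
          (Polynomial.derivative p)) (k : ℕ) :
    (Submodule.Quotient.mk (δ (iX K ^ (k + 1))) : Qmod K) = (-((k : K) + 1)) • qe K (k + 1) := by
  rw [delta_iX_pow K δ hδ k, Submodule.Quotient.mk_neg, Submodule.Quotient.mk_smul]
  rw [show ((Submodule.Quotient.mk (iX K ^ (k + 2)) : Qmod K)) = qe K (k + 1) from rfl]
  rw [← Nat.cast_smul_eq_nsmul K, ← neg_smul]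
  push_cast
  ring_nf

end KashiwaraAux

set_option maxHeartbeats 4000000 in
set_option synthInstance.maxHeartbeats 1000000 in
open TensorProduct in
/-- Kashiwara-type submodule correspondence: for a left
`D_{n'}`-module `N` and `M = N ⊗_K H¹_{(x)}(K[x])` with its natural
`D_{n'+1}`-module structure, `L ↦ L ⊗_K H¹_{(x)}(K[x])` is an
inclusion-preserving bijection between `D_{n'}`-submodules of `N` and
`D_{n'+1}`-submodules of `M`; in particular the lengths agree. -/
theorem kashiwara_correspondence
    (K : Type) [Field K] [CharZero K] (n' : ℕ)
    (N : Type) [AddCommGroup N] [Module K N] [Module (Weyl K n') N]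
    [IsScalarTower K (Weyl K n') N]
    [Module (Weyl K (n' + 1)) (N ⊗[K] Qmod K)]
    [IsScalarTower K (Weyl K (n' + 1)) (N ⊗[K] Qmod K)]
    (hten : TensorNatActs K n' N) :
    (∃ e : Submodule (Weyl K n') N ≃o
        Submodule (Weyl K (n' + 1)) (N ⊗[K] Qmod K),
      ∀ L : Submodule (Weyl K n') N,
        ((e L : Submodule (Weyl K (n' + 1)) (N ⊗[K] Qmod K)) :
            Set (N ⊗[K] Qmod K)) =
          ↑(LinearMap.range (TensorProduct.map
            ((Submodule.subtype L).restrictScalars K)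
            (LinearMap.id (R := K) (M := Qmod K))))) ∧
    mlength (Weyl K (n' + 1)) (N ⊗[K] Qmod K) = mlength (Weyl K n') N := by
    classical
  obtain ⟨hx, hd, hxl, δ, hδp, hδl⟩ := hten
  obtain ⟨π, hπ⟩ := exists_piQ K
  -- commutation of K-scalars with Weyl action
  have wksmul : ∀ (w : Weyl K (n' + 1)) (c : K) (u : N ⊗[K] Qmod K),
      w • c • u = c • w • u := by
    intro w c u
    calc w • c • u = w • (algebraMap K (Weyl K (n' + 1)) c) • u := by
          rw [algebraMap_smul]
      _ = (w * algebraMap K (Weyl K (n' + 1)) c) • u := by rw [mul_smul]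
      _ = ((algebraMap K (Weyl K (n' + 1)) c) * w) • u := by rw [Algebra.commutes]
      _ = c • w • u := by rw [mul_smul, algebraMap_smul]
  have ksmul : ∀ (M' : Submodule (Weyl K (n' + 1)) (N ⊗[K] Qmod K)) (c : K) (u : N ⊗[K] Qmod K),
      u ∈ M' → c • u ∈ M' := by
    intro M' c u hu
    rw [← algebraMap_smul (Weyl K (n' + 1)) c u]
    exact M'.smul_mem _ hu
  have ksmulN : ∀ (L : Submodule (Weyl K n') N) (c : K) (a : N),
      a ∈ L → c • a ∈ L := by
    intro L c a ha
    rw [← algebraMap_smul (Weyl K n') c a]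
    exact L.smul_mem _ ha
  -- action on the distinguished spanning vectors
  have hXq0 : ∀ a : N, wX K (n' + 1) (Fin.last n') • (a ⊗ₜ[K] qe K 0) = 0 := by
    intro a; rw [hxl, X_smul_qe_zero, tmul_zero]
  have hXqs : ∀ (a : N) (k : ℕ),
      wX K (n' + 1) (Fin.last n') • (a ⊗ₜ[K] qe K (k + 1)) = a ⊗ₜ[K] qe K k := by
    intro a k; rw [hxl, X_smul_qe_succ]
  have hDq : ∀ (a : N) (k : ℕ),
      wD K (n' + 1) (Fin.last n') • (a ⊗ₜ[K] qe K k)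
        = (-((k : K) + 1)) • (a ⊗ₜ[K] qe K (k + 1)) := by
    intro a k
    have h := hδl a (iX K ^ (k + 1))
    rw [show (Submodule.Quotient.mk (iX K ^ (k + 1)) : Qmod K) = qe K k from rfl] at h
    rw [h, qe_deriv K δ hδp k, tmul_smul]
  have KL1 : ∀ (M' : Submodule (Weyl K (n' + 1)) (N ⊗[K] Qmod K)) (a : N),
      a ⊗ₜ[K] qe K 0 ∈ M' → ∀ k, a ⊗ₜ[K] qe K k ∈ M' := by
    intro M' a h k
    induction k with
    | zero => exact h
    | succ k ih =>
      have h2 := M'.smul_mem (wD K (n' + 1) (Fin.last n')) ih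
      rw [hDq] at h2
      have h3 := ksmul M' (-((k : K) + 1))⁻¹ _ h2
      rw [smul_smul, inv_mul_cancel₀ (neg_ne_zero.mpr (Nat.cast_add_one_ne_zero k)),
        one_smul] at h3
      exact h3
  have KL0 : ∀ (M' : Submodule (Weyl K (n' + 1)) (N ⊗[K] Qmod K)) (k : ℕ) (a : N),
      a ⊗ₜ[K] qe K k ∈ M' → a ⊗ₜ[K] qe K 0 ∈ M' := by
    intro M' k
    induction k with
    | zero => exact fun a => id
    | succ k ih =>
      intro a h
      apply ih
      have h2 := M'.smul_mem (wX K (n' + 1) (Fin.last n')) h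
      rwa [hXqs] at h2
  have KL2 : ∀ (M' : Submodule (Weyl K (n' + 1)) (N ⊗[K] Qmod K)) (m : ℕ) (a : ℕ → N),
      (∑ k ∈ Finset.range m, a k ⊗ₜ[K] qe K k) ∈ M' →
      ∀ k < m, a k ⊗ₜ[K] qe K 0 ∈ M' := by
    intro M' m
    induction m with
    | zero => intro a _ k hk; omega
    | succ m ih =>
      intro a hu
      have hterm : ∀ k : ℕ,
          (wX K (n' + 1) (Fin.last n') * wD K (n' + 1) (Fin.last n')) • (a k ⊗ₜ[K] qe K k)
            + ((m : K) + 1) • (a k ⊗ₜ[K] qe K k)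
          = (((m : K) - (k : K)) • a k) ⊗ₜ[K] qe K k := by
        intro k
        rw [mul_smul, hDq, wksmul, hXqs, smul_tmul', smul_tmul',
          ← TensorProduct.add_tmul, ← add_smul]
        congr 1
        ring
      have hv : (wX K (n' + 1) (Fin.last n') * wD K (n' + 1) (Fin.last n')) •
            (∑ k ∈ Finset.range (m + 1), a k ⊗ₜ[K] qe K k)
          + ((m : K) + 1) • (∑ k ∈ Finset.range (m + 1), a k ⊗ₜ[K] qe K k)
          = ∑ k ∈ Finset.range m, (((m : K) - (k : K)) • a k) ⊗ₜ[K] qe K k := by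
        rw [Finset.smul_sum, Finset.smul_sum, ← Finset.sum_add_distrib]
        calc (∑ k ∈ Finset.range (m + 1),
              ((wX K (n' + 1) (Fin.last n') * wD K (n' + 1) (Fin.last n')) • (a k ⊗ₜ[K] qe K k)
                + ((m : K) + 1) • (a k ⊗ₜ[K] qe K k)))
            = ∑ k ∈ Finset.range (m + 1), (((m : K) - (k : K)) • a k) ⊗ₜ[K] qe K k :=
              Finset.sum_congr rfl fun k _ => hterm k
          _ = ∑ k ∈ Finset.range m, (((m : K) - (k : K)) • a k) ⊗ₜ[K] qe K k := by
              rw [Finset.sum_range_succ, sub_self, zero_smul, TensorProduct.zero_tmul, add_zero]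
      have hv2 : (∑ k ∈ Finset.range m, (((m : K) - (k : K)) • a k) ⊗ₜ[K] qe K k) ∈ M' := by
        rw [← hv]
        exact add_mem (M'.smul_mem _ hu) (ksmul M' _ _ hu)
      have hb := ih (fun k => ((m : K) - (k : K)) • a k) hv2
      have hak : ∀ k < m, a k ⊗ₜ[K] qe K 0 ∈ M' := by
        intro k hk
        have h1 := hb k hk
        rw [← smul_tmul'] at h1
        have h2 := ksmul M' ((m : K) - (k : K))⁻¹ _ h1
        have hne : (m : K) - (k : K) ≠ 0 :=
          sub_ne_zero.mpr (Nat.cast_injective.ne (Nat.ne_of_gt hk))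
        rw [smul_smul, inv_mul_cancel₀ hne, one_smul] at h2
        exact h2
      intro k hk
      rcases Nat.lt_succ_iff_lt_or_eq.mp hk with hk' | rfl
      · exact hak k hk'
      · have hmem : a k ⊗ₜ[K] qe K k ∈ M' := by
          have hsum : a k ⊗ₜ[K] qe K k
              = (∑ j ∈ Finset.range (k + 1), a j ⊗ₜ[K] qe K j)
                - ∑ j ∈ Finset.range k, a j ⊗ₜ[K] qe K j := by
            rw [Finset.sum_range_succ]; abel
          rw [hsum]
          exact sub_mem hu (Submodule.sum_mem _ fun j hj =>
            KL1 M' (a j) (hak j (Finset.mem_range.mp hj)) j)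
        exact KL0 M' k (a k) hmem
  -- padding and representation by finite sums
  have pad : ∀ (m m' : ℕ) (a : ℕ → N), m ≤ m' →
      (∑ k ∈ Finset.range m, a k ⊗ₜ[K] qe K k)
        = ∑ k ∈ Finset.range m', (if k < m then a k else 0) ⊗ₜ[K] qe K k := by
    intro m m' a hmm
    have h1 : (∑ k ∈ Finset.range m, a k ⊗ₜ[K] qe K k)
        = ∑ k ∈ Finset.range m, (if k < m then a k else 0) ⊗ₜ[K] qe K k :=
      Finset.sum_congr rfl fun k hk => by
        rw [if_pos (Finset.mem_range.mp hk)]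
    rw [h1]
    refine Finset.sum_subset (Finset.range_subset_range.mpr hmm) ?_
    intro k _ hk
    rw [if_neg (fun h => hk (Finset.mem_range.mpr h)), TensorProduct.zero_tmul]
  have hadd : ∀ u v : N ⊗[K] Qmod K,
      (∃ (m : ℕ) (a : ℕ → N), u = ∑ k ∈ Finset.range m, a k ⊗ₜ[K] qe K k) →
      (∃ (m : ℕ) (a : ℕ → N), v = ∑ k ∈ Finset.range m, a k ⊗ₜ[K] qe K k) →
      (∃ (m : ℕ) (a : ℕ → N), u + v = ∑ k ∈ Finset.range m, a k ⊗ₜ[K] qe K k) := by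
    rintro _ _ ⟨m1, a1, rfl⟩ ⟨m2, a2, rfl⟩
    refine ⟨max m1 m2, fun k => (if k < m1 then a1 k else 0) + (if k < m2 then a2 k else 0), ?_⟩
    rw [pad m1 (max m1 m2) a1 (le_max_left _ _), pad m2 (max m1 m2) a2 (le_max_right _ _),
      ← Finset.sum_add_distrib]
    exact Finset.sum_congr rfl fun k _ => (TensorProduct.add_tmul _ _ _).symm
  have KL3 : ∀ u : N ⊗[K] Qmod K, ∃ (m : ℕ) (a : ℕ → N),
      u = ∑ k ∈ Finset.range m, a k ⊗ₜ[K] qe K k := by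
    intro u
    induction u using TensorProduct.induction_on with
    | zero => exact ⟨0, fun _ => 0, by simp⟩
    | add u v hu hv => exact hadd u v hu hv
    | tmul a b =>
      obtain ⟨c, rfl⟩ := Submodule.Quotient.mk_surjective _ b
      have hbb := mk_mem_span_qe K c
      refine Submodule.span_induction
        (p := fun x _ => ∃ (m : ℕ) (a' : ℕ → N),
          a ⊗ₜ[K] x = ∑ k ∈ Finset.range m, a' k ⊗ₜ[K] qe K k) ?_ ?_ ?_ ?_ hbb
      · rintro x ⟨k, rfl⟩
        refine ⟨k + 1, fun j => if j = k then a else 0, ?_⟩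
        rw [Finset.sum_eq_single_of_mem k (Finset.mem_range.mpr (Nat.lt_succ_self k))
          (fun j _ hj => by simp only [if_neg hj, TensorProduct.zero_tmul])]
        simp
      · exact ⟨0, fun _ => 0, by simp⟩
      · rintro x y _ _ ⟨m1, a1, h1⟩ ⟨m2, a2, h2⟩
        rw [TensorProduct.tmul_add, h1, h2]
        exact hadd _ _ ⟨m1, a1, rfl⟩ ⟨m2, a2, rfl⟩
      · rintro c' x _ ⟨m1, a1, h1⟩
        refine ⟨m1, fun k => c' • a1 k, ?_⟩
        rw [TensorProduct.tmul_smul, h1, Finset.smul_sum]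
        exact Finset.sum_congr rfl fun k _ => smul_tmul' c' _ _
  -- the submodule `L ⊗ Q` inside `N ⊗ Q`
  let KS : Submodule (Weyl K n') N → Submodule K (N ⊗[K] Qmod K) := fun L =>
    LinearMap.range (TensorProduct.map ((Submodule.subtype L).restrictScalars K)
      (LinearMap.id (R := K) (M := Qmod K)))
  have mem_KS : ∀ (L : Submodule (Weyl K n') N) (a : N), a ∈ L → ∀ b : Qmod K,
      a ⊗ₜ[K] b ∈ KS L := by
    intro L a ha b
    exact ⟨(⟨a, ha⟩ : L) ⊗ₜ[K] b, by rw [TensorProduct.map_tmul]; rfl⟩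
  have KSspan : ∀ L : Submodule (Weyl K n') N,
      KS L = Submodule.span K {t | ∃ a ∈ L, ∃ b : Qmod K, a ⊗ₜ[K] b = t} := by
    intro L
    show LinearMap.range _ = _
    rw [TensorProduct.range_map_eq_span_tmul]
    congr 1
    ext t
    constructor
    · rintro ⟨am, b, rfl⟩; exact ⟨am.1, am.2, b, rfl⟩
    · rintro ⟨a, ha, b, rfl⟩; exact ⟨⟨a, ha⟩, b, rfl⟩
  have genclose : ∀ (L : Submodule (Weyl K n') N) (w : Weyl K (n' + 1)),
      (∀ a ∈ L, ∀ b : Qmod K, w • (a ⊗ₜ[K] b) ∈ KS L) →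
      ∀ u ∈ KS L, w • u ∈ KS L := by
    intro L w hw u hu
    rw [KSspan] at hu
    refine Submodule.span_induction (p := fun x _ => w • x ∈ KS L) ?_ ?_ ?_ ?_ hu
    · rintro t ⟨a, ha, b, rfl⟩; exact hw a ha b
    · show w • (0 : N ⊗[K] Qmod K) ∈ KS L
      rw [smul_zero]; exact zero_mem _
    · intro x y _ _ hx hy; rw [smul_add]; exact add_mem hx hy
    · intro c x _ hx; rw [wksmul]; exact Submodule.smul_mem _ c hx
  have KSX : ∀ (L : Submodule (Weyl K n') N) (i : Fin (n' + 1)),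
      ∀ u ∈ KS L, wX K (n' + 1) i • u ∈ KS L := by
    intro L i
    refine genclose L _ ?_
    intro a ha b
    induction i using Fin.lastCases with
    | last => rw [hxl]; exact mem_KS L a ha _
    | cast j => rw [hx]; exact mem_KS L _ (L.smul_mem _ ha) _
  have KSD : ∀ (L : Submodule (Weyl K n') N) (i : Fin (n' + 1)),
      ∀ u ∈ KS L, wD K (n' + 1) i • u ∈ KS L := by
    intro L i
    refine genclose L _ ?_
    intro a ha b
    induction i using Fin.lastCases with
    | last =>
      obtain ⟨c, rfl⟩ := Submodule.Quotient.mk_surjective _ b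
      rw [hδl]; exact mem_KS L a ha _
    | cast j => rw [hd]; exact mem_KS L _ (L.smul_mem _ ha) _
  let toD : Submodule (Weyl K n') N → Submodule (Weyl K (n' + 1)) (N ⊗[K] Qmod K) := fun L =>
    { carrier := KS L
      add_mem' := fun h h' => add_mem h h'
      zero_mem' := zero_mem _
      smul_mem' := fun w {u} hu => weyl_smul_mem (KS L) (KSX L) (KSD L) w u hu }
  let SK : Submodule (Weyl K (n' + 1)) (N ⊗[K] Qmod K) → Submodule K N := fun M' =>
    { carrier := {a : N | a ⊗ₜ[K] qe K 0 ∈ M'}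
      add_mem' := fun {a b} ha hb => by
        show (a + b) ⊗ₜ[K] qe K 0 ∈ M'
        rw [TensorProduct.add_tmul]; exact add_mem ha hb
      zero_mem' := by
        show (0 : N) ⊗ₜ[K] qe K 0 ∈ M'
        rw [TensorProduct.zero_tmul]; exact zero_mem _
      smul_mem' := fun c {a} ha => by
        show (c • a) ⊗ₜ[K] qe K 0 ∈ M'
        rw [← smul_tmul']; exact ksmul M' c _ ha }
  let fromD : Submodule (Weyl K (n' + 1)) (N ⊗[K] Qmod K) → Submodule (Weyl K n') N :=
    fun M' =>
    { carrier := SK M'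
      add_mem' := fun h h' => add_mem h h'
      zero_mem' := zero_mem _
      smul_mem' := fun w {a} ha => by
        refine weyl_smul_mem (SK M') ?_ ?_ w a ha
        · intro i a' ha'
          show (wX K n' i • a') ⊗ₜ[K] qe K 0 ∈ M'
          rw [← hx]; exact M'.smul_mem _ ha'
        · intro i a' ha'
          show (wD K n' i • a') ⊗ₜ[K] qe K 0 ∈ M'
          rw [← hd]; exact M'.smul_mem _ ha' }
  -- the projection argument
  let Φ : N ⊗[K] Qmod K →ₗ[K] N :=
    (TensorProduct.rid K N).toLinearMap ∘ₗ (LinearMap.lTensor N π)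
  have hΦ : ∀ (a : N) (b : Qmod K), Φ (a ⊗ₜ[K] b) = π b • a := by
    intro a b
    show (TensorProduct.rid K N) (LinearMap.lTensor N π (a ⊗ₜ[K] b)) = π b • a
    rw [LinearMap.lTensor_tmul, TensorProduct.rid_tmul]
  have Φmem : ∀ (L : Submodule (Weyl K n') N), ∀ u ∈ KS L, Φ u ∈ L := by
    intro L u hu
    rw [KSspan] at hu
    refine Submodule.span_induction (p := fun x _ => Φ x ∈ L) ?_ ?_ ?_ ?_ hu
    · rintro t ⟨a, ha, b, rfl⟩
      rw [hΦ]; exact ksmulN L _ a ha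
    · show Φ (0 : N ⊗[K] Qmod K) ∈ L
      rw [map_zero]; exact zero_mem _
    · intro x y _ _ hxx hyy; rw [map_add]; exact add_mem hxx hyy
    · intro c x _ hxx; rw [map_smul]; exact ksmulN L c _ hxx
  have key_iff : ∀ (L : Submodule (Weyl K n') N) (a : N),
      a ⊗ₜ[K] qe K 0 ∈ KS L ↔ a ∈ L := by
    intro L a
    constructor
    · intro h
      have h2 := Φmem L _ h
      rwa [hΦ, hπ, one_smul] at h2
    · intro h; exact mem_KS L a h _
  have left_inv : ∀ L, fromD (toD L) = L := by
    intro L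
    apply SetLike.ext
    intro a
    exact key_iff L a
  have right_inv : ∀ M', toD (fromD M') = M' := by
    intro M'
    apply le_antisymm
    · intro u hu
      have hle : KS (fromD M') ≤ M'.restrictScalars K := by
        rw [KSspan]
        refine Submodule.span_le.mpr ?_
        rintro t ⟨a, ha, b, rfl⟩
        show a ⊗ₜ[K] b ∈ M'
        obtain ⟨c, rfl⟩ := Submodule.Quotient.mk_surjective _ b
        have hbb := mk_mem_span_qe K c
        refine Submodule.span_induction (p := fun x _ => a ⊗ₜ[K] x ∈ M') ?_ ?_ ?_ ?_ hbb
        · rintro x ⟨k, rfl⟩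
          exact KL1 M' a ha k
        · show a ⊗ₜ[K] (0 : Qmod K) ∈ M'
          rw [TensorProduct.tmul_zero]; exact zero_mem _
        · intro x y _ _ hxx hyy; rw [TensorProduct.tmul_add]; exact add_mem hxx hyy
        · intro c' x _ hxx; rw [TensorProduct.tmul_smul]; exact ksmul M' c' _ hxx
      exact hle hu
    · intro u hu
      obtain ⟨m, a, rfl⟩ := KL3 u
      have hk := KL2 M' m a hu
      exact Submodule.sum_mem _ fun k hkm =>
        mem_KS (fromD M') (a k) (hk k (Finset.mem_range.mp hkm)) (qe K k)
  let e : Submodule (Weyl K n') N ≃o Submodule (Weyl K (n' + 1)) (N ⊗[K] Qmod K) :=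
    { toFun := toD
      invFun := fromD
      left_inv := left_inv
      right_inv := right_inv
      map_rel_iff' := by
        intro L₁ L₂
        constructor
        · intro h
          have h2 : fromD (toD L₁) ≤ fromD (toD L₂) := by
            intro a ha
            exact h ha
          rwa [left_inv, left_inv] at h2
        · intro h u hu
          have hle : KS L₁ ≤ KS L₂ := by
            rw [KSspan, KSspan]
            refine Submodule.span_mono ?_
            rintro t ⟨a, ha, b, rfl⟩
            exact ⟨a, h ha, b, rfl⟩
          exact hle hu }
  refine ⟨⟨e, fun L => rfl⟩, ?_⟩
  show Order.krullDim _ = Order.krullDim _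
  exact (Order.krullDim_eq_of_orderIso e).symm
end

section
/- Deletion-restriction for Poincaré polynomials: Let A be a hyperplane arrangement, H_0 ∈ A, A' = A \ {H_0} the deleted arrangement, and A'' the restriction of A' to H_0. Then π(A,t) = π(A',t) + t·π(A'',t). -/
open Polynomial MvPolynomial

section Helpers
open scoped Classical
variable {K : Type} [Field K] {n : ℕ}


lemma finsupp_deg_le (d : Fin n →₀ ℕ) (j : Fin n) : d j ≤ d.sum (fun _ e => e) := by
  classical
  by_cases hj : j ∈ d.support
  · exact Finset.single_le_sum (fun _ _ => Nat.zero_le _) hj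
  · simp [Finsupp.notMem_support_iff.mp hj]

lemma deg_le_one_support (p : MvPolynomial (Fin n) K) (hp : p.totalDegree ≤ 1) :
    p.support ⊆ insert 0 (Finset.univ.image fun i => Finsupp.single i (1:ℕ)) := by
  classical
  intro d hd
  have hle : d.sum (fun _ e => e) ≤ 1 := le_trans (MvPolynomial.le_totalDegree hd) hp
  rcases Nat.le_one_iff_eq_zero_or_eq_one.mp hle with h0 | h1
  · have hz : ∀ j, d j = 0 := fun j => by have := finsupp_deg_le d j; omega
    have : d = 0 := Finsupp.ext hz
    simp [this]
  · obtain ⟨i, hi⟩ : ∃ i, d i ≠ 0 := by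
      by_contra h
      push_neg at h
      have hd0 : d = 0 := Finsupp.ext h
      rw [hd0] at h1
      simp [Finsupp.sum_zero_index] at h1
    have hdi1 : d i = 1 := le_antisymm (h1 ▸ finsupp_deg_le d i) (Nat.one_le_iff_ne_zero.mpr hi)
    have hdj : ∀ j, j ≠ i → d j = 0 := by
      intro j hji
      by_contra hj
      have hsub : ({i, j} : Finset (Fin n)) ⊆ d.support := by
        intro k hk
        simp only [Finset.mem_insert, Finset.mem_singleton] at hk
        rcases hk with rfl | rfl <;> simp [Finsupp.mem_support_iff, hi, hj]
      have : d i + d j ≤ d.sum fun _ e => e := by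
        rw [Finsupp.sum]
        calc d i + d j = ∑ k ∈ ({i, j} : Finset (Fin n)), d k := by
              rw [Finset.sum_pair (Ne.symm hji)]
          _ ≤ _ := Finset.sum_le_sum_of_subset hsub
      omega
    have : d = Finsupp.single i 1 := by
      ext j
      rcases eq_or_ne j i with rfl | hji
      · simp [hdi1]
      · simp [Finsupp.single_apply, (Ne.symm hji), hdj j hji]
    rw [this]
    exact Finset.mem_insert_of_mem (Finset.mem_image_of_mem _ (Finset.mem_univ i))

lemma eval_deg_le_one (p : MvPolynomial (Fin n) K) (hp : p.totalDegree ≤ 1)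
    (x : Fin n → K) :
    eval x p = (∑ i, coeff (Finsupp.single i 1) p * x i) + coeff 0 p := by
  classical
  rw [MvPolynomial.eval_eq']
  rw [Finset.sum_subset (deg_le_one_support p hp)
    (by intro d _ hd; rw [MvPolynomial.notMem_support_iff.mp hd]; ring)]
  rw [Finset.sum_insert (by simp [eq_comm, Finsupp.single_eq_zero])]
  rw [Finset.sum_image (by
    intro i _ j _ h
    exact Finsupp.single_left_injective one_ne_zero h)]
  rw [add_comm]
  congr 1
  · apply Finset.sum_congr rfl
    intro i _
    congr 1
    rw [Finset.prod_eq_single i (fun j _ hji => by simp [Finsupp.single_apply, Ne.symm hji]) (by simp)]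
    simp
  · simp


noncomputable def lfun (a : Fin n → K) : (Fin n → K) →ₗ[K] K :=
  ∑ i, a i • LinearMap.proj i

lemma lfun_apply (a x : Fin n → K) : lfun a x = ∑ i, a i * x i := by
  simp [lfun]

def affH (a : Fin n → K) (c : K) : Set (Fin n → K) := {x | (∑ i, a i * x i) + c = 0}

lemma affH_nonempty {a : Fin n → K} (ha : a ≠ 0) (c : K) : (affH a c).Nonempty := by
  obtain ⟨i₀, hi₀⟩ : ∃ i, a i ≠ 0 := by
    by_contra h; push_neg at h; exact ha (funext h)
  set x : Fin n → K := Pi.single i₀ (-c / a i₀) with hxdef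
  refine ⟨x, ?_⟩
  have this1 : ∑ i, a i * x i = a i₀ * x i₀ :=
    Finset.sum_eq_single i₀ (fun j _ hj => by simp [hxdef, Pi.single_eq_of_ne hj]) (by simp)
  have this2 : x i₀ = -c / a i₀ := by simp [hxdef]
  simp only [affH, Set.mem_setOf_eq, this1, this2]
  field_simp
  ring

lemma affH_ne_univ {a : Fin n → K} (ha : a ≠ 0) (c : K) : ¬ (Set.univ : Set (Fin n → K)) ⊆ affH a c := by
  obtain ⟨i₀, hi₀⟩ : ∃ i, a i ≠ 0 := by
    by_contra h; push_neg at h; exact ha (funext h)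
  intro h
  set x : Fin n → K := Pi.single i₀ ((1 - c) / a i₀) with hxdef
  have hx := h (Set.mem_univ x)
  have hs : ∑ i, a i * x i = a i₀ * x i₀ :=
    Finset.sum_eq_single i₀ (fun j _ hj => by simp [hxdef, Pi.single_eq_of_ne hj]) (by simp)
  have hs2 : x i₀ = (1 - c) / a i₀ := by simp [hxdef]
  simp only [affH, Set.mem_setOf_eq, hs, hs2] at hx
  rw [mul_div_cancel₀ _ hi₀] at hx
  simp at hx

lemma mem_affH_iff (a : Fin n → K) (c : K) (x : Fin n → K) :
    x ∈ affH a c ↔ lfun a x = -c := by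
  rw [affH, Set.mem_setOf_eq, lfun_apply]
  constructor <;> intro h <;> linear_combination h

lemma lfun_ne_zero {a : Fin n → K} (ha : a ≠ 0) : lfun a ≠ 0 := by
  obtain ⟨i₀, hi₀⟩ : ∃ i, a i ≠ 0 := by
    by_contra h; push_neg at h; exact ha (funext h)
  intro h
  have := congrArg (fun f => f (Pi.single i₀ 1)) (congrArg (DFunLike.coe) h)
  simp only [lfun_apply] at this
  rw [Finset.sum_eq_single i₀ (fun j _ hj => by simp [Pi.single_eq_of_ne hj]) (by simp)] at this
  simp at this
  exact hi₀ this

lemma vectorSpan_affH {a : Fin n → K} (ha : a ≠ 0) (c : K) :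
    vectorSpan K (affH a c) = LinearMap.ker (lfun a) := by
  obtain ⟨x₀, hx₀⟩ := affH_nonempty ha c
  apply le_antisymm
  · rw [vectorSpan_def, Submodule.span_le]
    rintro v ⟨x, hx, y, hy, rfl⟩
    rw [mem_affH_iff] at hx hy
    simp only [SetLike.mem_coe, LinearMap.mem_ker, vsub_eq_sub, map_sub, hx, hy, sub_self]
  · intro w hw
    rw [LinearMap.mem_ker] at hw
    have hmem : x₀ + w ∈ affH a c := by
      rw [mem_affH_iff] at hx₀ ⊢
      rw [map_add, hw, add_zero, hx₀]
    have : (x₀ + w) -ᵥ x₀ ∈ vectorSpan K (affH a c) := vsub_mem_vectorSpan K hmem hx₀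
    simpa using this

lemma finrank_ker_lfun {a : Fin n → K} (ha : a ≠ 0) :
    Module.finrank K (LinearMap.ker (lfun a)) = n - 1 := by
  have hr : LinearMap.range (lfun a) = ⊤ := by
    obtain ⟨x, hx⟩ : ∃ x, lfun a x ≠ 0 := by
      by_contra hc
      push_neg at hc
      exact lfun_ne_zero ha (LinearMap.ext fun y => by rw [hc y, LinearMap.zero_apply])
    rw [LinearMap.range_eq_top]
    intro t
    exact ⟨(t / lfun a x) • x, by rw [map_smul, smul_eq_mul, div_mul_cancel₀ _ hx]⟩
  have h1 := LinearMap.finrank_range_add_finrank_ker (lfun a)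
  rw [hr, finrank_top] at h1
  have h2 : Module.finrank K (Fin n → K) = n := by
    rw [Module.finrank_fintype_fun_eq_card, Fintype.card_fin]
  have h3 : Module.finrank K K = 1 := Module.finrank_self K
  omega

lemma affH_subset_affH {a b : Fin n → K} (ha : a ≠ 0) (hb : b ≠ 0) {c d : K}
    (h : affH a c ⊆ affH b d) : affH b d ⊆ affH a c := by
  obtain ⟨x₀, hx₀⟩ := affH_nonempty ha c
  have hker : LinearMap.ker (lfun a) ≤ LinearMap.ker (lfun b) := by
    intro w hw
    rw [LinearMap.mem_ker] at hw ⊢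
    have h1 : x₀ + w ∈ affH a c := by
      rw [mem_affH_iff] at hx₀ ⊢; rw [map_add, hw, add_zero, hx₀]
    have h2 := h h1
    have h3 := h hx₀
    rw [mem_affH_iff] at h2 h3
    rw [map_add, h3] at h2
    linear_combination h2
  have hkeq : LinearMap.ker (lfun a) = LinearMap.ker (lfun b) := by
    apply Submodule.eq_of_le_of_finrank_le hker
    rw [finrank_ker_lfun ha, finrank_ker_lfun hb]
  intro y hy
  rw [mem_affH_iff] at hy ⊢
  have h3 : lfun b x₀ = -d := (mem_affH_iff _ _ _).mp (h hx₀)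
  have hwk : y - x₀ ∈ LinearMap.ker (lfun b) := by
    rw [LinearMap.mem_ker, map_sub, hy, h3, sub_self]
  rw [← hkeq, LinearMap.mem_ker, map_sub] at hwk
  rw [mem_affH_iff] at hx₀
  linear_combination hwk + hx₀

lemma zeroSet_eq_affH (p : MvPolynomial (Fin n) K) (hp : p.totalDegree = 1) :
    ∃ a : Fin n → K, a ≠ 0 ∧ zeroSet K n p = affH a (coeff 0 p) := by
  classical
  refine ⟨fun i => coeff (Finsupp.single i 1) p, ?_, ?_⟩
  · have hp0 : p ≠ 0 := fun h => by simp [h] at hp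
    obtain ⟨d, hd, hdeq⟩ := Finset.exists_mem_eq_sup p.support
      (MvPolynomial.support_nonempty.mpr hp0) fun d => d.sum fun _ e => e
    have hdsum : d.sum (fun _ e => e) = 1 := by
      rw [MvPolynomial.totalDegree] at hp
      omega
    have hmem := deg_le_one_support p hp.le hd
    have hd0 : d ≠ 0 := by
      intro h
      rw [h] at hdsum
      simp [Finsupp.sum_zero_index] at hdsum
    rw [Finset.mem_insert] at hmem
    rcases hmem with h | h
    · exact absurd h hd0
    · obtain ⟨i, _, rfl⟩ := Finset.mem_image.mp h
      intro hfun
      have : coeff (Finsupp.single i 1) p = 0 := congrFun hfun i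
      exact (MvPolynomial.mem_support_iff.mp hd) this
  · ext x
    simp only [zeroSet, Set.mem_setOf_eq, affH, eval_deg_le_one p hp.le x]

lemma exists_affH_repr (𝒜 : Finset (Set (Fin n → K)))
    (hhyp : ∀ H ∈ 𝒜, ∃ p : MvPolynomial (Fin n) K, p.totalDegree = 1 ∧ H = zeroSet K n p)
    {H : Set (Fin n → K)} (hH : H ∈ 𝒜) :
    ∃ a : Fin n → K, ∃ c : K, a ≠ 0 ∧ H = affH a c := by
  obtain ⟨p, hp1, hpz⟩ := hhyp H hH
  obtain ⟨a, ha, hz⟩ := zeroSet_eq_affH p hp1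
  exact ⟨a, coeff 0 p, ha, hpz.trans hz⟩

lemma vectorSpan_univ_top : vectorSpan K (Set.univ : Set (Fin n → K)) = ⊤ := by
  rw [eq_top_iff]
  intro v _
  have : v -ᵥ 0 ∈ vectorSpan K (Set.univ : Set (Fin n → K)) :=
    vsub_mem_vectorSpan K (Set.mem_univ v) (Set.mem_univ 0)
  simpa using this

lemma finrank_vectorSpan_univ :
    Module.finrank K (vectorSpan K (Set.univ : Set (Fin n → K))) = n := by
  rw [vectorSpan_univ_top, finrank_top, Module.finrank_fintype_fun_eq_card, Fintype.card_fin]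

lemma finrank_vectorSpan_affH {a : Fin n → K} (ha : a ≠ 0) (c : K) :
    Module.finrank K (vectorSpan K (affH a c)) = n - 1 := by
  rw [vectorSpan_affH ha c, finrank_ker_lfun ha]

lemma codim_univ_eq {a : Fin n → K} (ha : a ≠ 0) (c : K) {Y : Set (Fin n → K)}
    (hY : Y ⊆ affH a c) :
    codim K n Set.univ Y = codim K n (affH a c) Y + 1 := by
  have hn : 1 ≤ n := by
    obtain ⟨i₀, _⟩ : ∃ i, a i ≠ 0 := by
      by_contra h; push_neg at h; exact ha (funext h)
    have := i₀.isLt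
    omega
  have hle : Module.finrank K (vectorSpan K Y) ≤
      Module.finrank K (vectorSpan K (affH a c)) :=
    Submodule.finrank_mono (vectorSpan_mono K hY)
  rw [finrank_vectorSpan_affH ha c] at hle
  unfold codim
  rw [finrank_vectorSpan_univ, finrank_vectorSpan_affH ha c]
  omega

end Helpers

section Mobius
open scoped Classical
variable {K : Type} [Field K] {n : ℕ}

lemma mem_interPoset_iff {V0 : Set (Fin n → K)} {𝒞 : Finset (Set (Fin n → K))}
    {X : Set (Fin n → K)} :
    X ∈ interPoset K n V0 𝒞 ↔ (∃ S, S ⊆ 𝒞 ∧ V0 ∩ ⋂ H ∈ S, H = X) ∧ X ≠ ∅ := by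
  simp only [interPoset, Finset.mem_filter, Finset.mem_image, Finset.mem_powerset]

lemma V0_mem_interPoset {V0 : Set (Fin n → K)} (hV0 : V0 ≠ ∅)
    (𝒞 : Finset (Set (Fin n → K))) : V0 ∈ interPoset K n V0 𝒞 :=
  mem_interPoset_iff.mpr ⟨⟨∅, Finset.empty_subset _, by simp⟩, hV0⟩

lemma interPoset_subset_V0 {V0 : Set (Fin n → K)} {𝒞 : Finset (Set (Fin n → K))}
    {X : Set (Fin n → K)} (hX : X ∈ interPoset K n V0 𝒞) : X ⊆ V0 := by
  obtain ⟨⟨S, _, rfl⟩, _⟩ := mem_interPoset_iff.mp hX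
  exact Set.inter_subset_left

lemma interPoset_exists_hyp {V0 : Set (Fin n → K)} {𝒞 : Finset (Set (Fin n → K))}
    {X : Set (Fin n → K)} (hX : X ∈ interPoset K n V0 𝒞) (hXV : X ≠ V0) :
    ∃ H ∈ 𝒞, X ⊆ H := by
  obtain ⟨⟨S, hS, rfl⟩, hne⟩ := mem_interPoset_iff.mp hX
  have hSne : S.Nonempty := by
    rcases S.eq_empty_or_nonempty with rfl | h
    · exact absurd (by simp) hXV
    · exact h
  obtain ⟨H, hH⟩ := hSne
  exact ⟨H, hS hH, fun x hx => Set.mem_iInter₂.mp hx.2 H hH⟩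

lemma isMobius_eq_on {V0 : Set (Fin n → K)} (hV0 : V0 ≠ ∅) {ℬ : Finset (Set (Fin n → K))}
    {μ₁ μ₂ : Set (Fin n → K) → ℤ} (h₁ : IsMobius K n V0 ℬ μ₁) (h₂ : IsMobius K n V0 ℬ μ₂) :
    ∀ X ∈ interPoset K n V0 ℬ, μ₁ X = μ₂ X := by
  suffices h : ∀ m : ℕ, ∀ X ∈ interPoset K n V0 ℬ,
      ((interPoset K n V0 ℬ).filter fun Z => X ⊂ Z).card ≤ m → μ₁ X = μ₂ X by
    intro X hX; exact h _ X hX le_rfl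
  intro m
  induction m with
  | zero =>
    intro X hX hcard
    rcases eq_or_ne X V0 with rfl | hne
    · rw [h₁.1, h₂.1]
    · exfalso
      have hssub : X ⊂ V0 := ssubset_of_subset_of_ne (interPoset_subset_V0 hX) hne
      have hmem : V0 ∈ (interPoset K n V0 ℬ).filter fun Z => X ⊂ Z :=
        Finset.mem_filter.mpr ⟨V0_mem_interPoset hV0 _, hssub⟩
      have := Finset.card_pos.mpr ⟨V0, hmem⟩
      omega
  | succ m ih =>
    intro X hX hcard
    rcases eq_or_ne X V0 with rfl | hne
    · rw [h₁.1, h₂.1]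
    · have key : ∀ μ : Set (Fin n → K) → ℤ, IsMobius K n V0 ℬ μ →
          μ X = - ∑ Z ∈ (interPoset K n V0 ℬ).filter fun Z => X ⊂ Z, μ Z := by
        intro μ hμ
        have hrec := hμ.2 X hX hne
        have hsplit : (interPoset K n V0 ℬ).filter (fun Z => X ⊆ Z) =
            insert X ((interPoset K n V0 ℬ).filter fun Z => X ⊂ Z) := by
          ext Z
          simp only [Finset.mem_filter, Finset.mem_insert]
          constructor
          · rintro ⟨hZ, hXZ⟩
            rcases eq_or_ne Z X with rfl | hZX
            · exact Or.inl rfl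
            · exact Or.inr ⟨hZ, ssubset_of_subset_of_ne hXZ (Ne.symm hZX)⟩
          · rintro (rfl | ⟨hZ, hXZ⟩)
            · exact ⟨hX, subset_rfl⟩
            · exact ⟨hZ, hXZ.subset⟩
        rw [hsplit, Finset.sum_insert (by
          simp only [Finset.mem_filter]
          exact fun h => (lt_irrefl X h.2))] at hrec
        linarith
      rw [key μ₁ h₁, key μ₂ h₂]
      congr 1
      apply Finset.sum_congr rfl
      intro Z hZ
      rw [Finset.mem_filter] at hZ
      apply ih Z hZ.1
      have hsub : (interPoset K n V0 ℬ).filter (fun W => Z ⊂ W) ⊆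
          (interPoset K n V0 ℬ).filter fun W => X ⊂ W := by
        intro W hW
        rw [Finset.mem_filter] at hW ⊢
        exact ⟨hW.1, hZ.2.trans hW.2⟩
      have hssub : (interPoset K n V0 ℬ).filter (fun W => Z ⊂ W) ⊂
          (interPoset K n V0 ℬ).filter fun W => X ⊂ W := by
        rw [Finset.ssubset_iff_of_subset hsub]
        refine ⟨Z, Finset.mem_filter.mpr hZ, ?_⟩
        simp only [Finset.mem_filter]
        exact fun h => lt_irrefl Z h.2
      have := Finset.card_lt_card hssub
      omega

lemma poin_eq_whitney {V0 : Set (Fin n → K)} (hV0 : V0 ≠ ∅)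
    {ℬ 𝒞 : Finset (Set (Fin n → K))}
    (hP : interPoset K n V0 ℬ = interPoset K n V0 𝒞)
    (hns : ∀ H ∈ 𝒞, ¬ V0 ⊆ H)
    {μ : Set (Fin n → K) → ℤ} (hμ : IsMobius K n V0 ℬ μ) :
    poin K n V0 ℬ μ =
      ∑ S ∈ 𝒞.powerset.filter fun S => (V0 ∩ ⋂ H ∈ S, H) ≠ ∅,
        Polynomial.C ((-1 : ℤ) ^ S.card) *
          (- Polynomial.X) ^ codim K n V0 (V0 ∩ ⋂ H ∈ S, H) := by
  classical
  set g : Finset (Set (Fin n → K)) → Set (Fin n → K) := (fun S => V0 ∩ ⋂ H ∈ S, H) with hg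
  set ν : Set (Fin n → K) → ℤ :=
    (fun X => ∑ S ∈ 𝒞.powerset.filter fun S => g S = X, (-1 : ℤ) ^ S.card) with hν
  have hgmem : ∀ S ⊆ 𝒞, g S ≠ ∅ → g S ∈ interPoset K n V0 𝒞 := by
    intro S hS hne
    exact mem_interPoset_iff.mpr ⟨⟨S, hS, rfl⟩, hne⟩
  have hYsub : ∀ (Y : Set (Fin n → K)) (S : Finset (Set (Fin n → K))),
      Y ⊆ V0 → (Y ⊆ g S ↔ ∀ H ∈ S, Y ⊆ H) := by
    intro Y S hYV
    constructor
    · intro h H hH x hx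
      exact Set.mem_iInter₂.mp (h hx).2 H hH
    · intro h x hx
      exact ⟨hYV hx, Set.mem_iInter₂.mpr fun H hH => h H hH hx⟩
  have hνMob : IsMobius K n V0 ℬ ν := by
    constructor
    · have hfil : (𝒞.powerset.filter fun S => g S = V0) = {∅} := by
        ext S
        simp only [Finset.mem_filter, Finset.mem_powerset, Finset.mem_singleton]
        constructor
        · rintro ⟨hS𝒞, hSV⟩
          by_contra hSne
          obtain ⟨H, hH⟩ := Finset.nonempty_iff_ne_empty.mpr hSne
          apply hns H (hS𝒞 hH)
          intro x hx
          have hxg : x ∈ g S := hSV ▸ hx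
          exact Set.mem_iInter₂.mp hxg.2 H hH
        · rintro rfl
          exact ⟨Finset.empty_subset _, by simp [hg]⟩
      show (∑ S ∈ 𝒞.powerset.filter fun S => g S = V0, (-1 : ℤ) ^ S.card) = 1
      rw [hfil, Finset.sum_singleton]
      simp
    · intro Y hY hYV0
      rw [hP] at hY
      obtain ⟨H₁, hH₁𝒞, hYH₁⟩ := interPoset_exists_hyp hY hYV0
      have hYne : Y ≠ ∅ := (mem_interPoset_iff.mp hY).2
      have hYV : Y ⊆ V0 := interPoset_subset_V0 hY
      rw [hP]
      have hfib : ∀ Z ∈ (interPoset K n V0 𝒞).filter fun Z => Y ⊆ Z,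
          ν Z = ∑ S ∈ (𝒞.powerset.filter fun S => Y ⊆ g S).filter fun S => g S = Z,
            (-1 : ℤ) ^ S.card := by
        intro Z hZ
        rw [Finset.mem_filter] at hZ
        show (∑ S ∈ 𝒞.powerset.filter fun S => g S = Z, (-1 : ℤ) ^ S.card) = _
        congr 1
        ext S
        simp only [Finset.mem_filter, Finset.mem_powerset]
        constructor
        · rintro ⟨hS, hgS⟩
          exact ⟨⟨hS, hgS ▸ hZ.2⟩, hgS⟩
        · rintro ⟨⟨hS, _⟩, hgS⟩
          exact ⟨hS, hgS⟩
      have hmaps : ∀ S ∈ 𝒞.powerset.filter fun S => Y ⊆ g S,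
          g S ∈ (interPoset K n V0 𝒞).filter fun Z => Y ⊆ Z := by
        intro S hS
        rw [Finset.mem_filter, Finset.mem_powerset] at hS
        refine Finset.mem_filter.mpr ⟨hgmem S hS.1 ?_, hS.2⟩
        intro h
        exact hYne (Set.subset_eq_empty (h ▸ hS.2) rfl)
      rw [Finset.sum_congr rfl hfib,
        Finset.sum_fiberwise_of_maps_to hmaps (fun S => (-1 : ℤ) ^ S.card)]
      have hps : (𝒞.powerset.filter fun S => Y ⊆ g S) =
          (𝒞.filter fun H => Y ⊆ H).powerset := by
        ext S
        simp only [Finset.mem_filter, Finset.mem_powerset]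
        constructor
        · rintro ⟨hS, hYg⟩
          intro H hH
          exact Finset.mem_filter.mpr ⟨hS hH, (hYsub Y S hYV).mp hYg H hH⟩
        · intro hS
          have hS𝒞 : S ⊆ 𝒞 := fun H hH => (Finset.mem_filter.mp (hS hH)).1
          refine ⟨hS𝒞, (hYsub Y S hYV).mpr fun H hH => (Finset.mem_filter.mp (hS hH)).2⟩
      rw [hps]
      apply Finset.sum_powerset_neg_one_pow_card_of_nonempty
      exact ⟨H₁, Finset.mem_filter.mpr ⟨hH₁𝒞, hYH₁⟩⟩
  have hpoin_eq : poin K n V0 ℬ μ = poin K n V0 ℬ ν := by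
    unfold poin
    exact Finset.sum_congr rfl fun X hX => by
      rw [isMobius_eq_on hV0 hμ hνMob X hX]
  rw [hpoin_eq]
  unfold poin
  rw [hP]
  have hmaps2 : ∀ S ∈ 𝒞.powerset.filter fun S => g S ≠ ∅,
      g S ∈ interPoset K n V0 𝒞 := by
    intro S hS
    rw [Finset.mem_filter, Finset.mem_powerset] at hS
    exact hgmem S hS.1 hS.2
  calc ∑ X ∈ interPoset K n V0 𝒞, Polynomial.C (ν X) * (- Polynomial.X) ^ codim K n V0 X
      = ∑ X ∈ interPoset K n V0 𝒞,
          ∑ S ∈ (𝒞.powerset.filter fun S => g S ≠ ∅).filter fun S => g S = X,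
            Polynomial.C ((-1 : ℤ) ^ S.card) * (- Polynomial.X) ^ codim K n V0 (g S) := by
        apply Finset.sum_congr rfl
        intro X hX
        have hXne : X ≠ ∅ := (mem_interPoset_iff.mp hX).2
        have hinner : ∀ S ∈ (𝒞.powerset.filter fun S => g S ≠ ∅).filter fun S => g S = X,
            Polynomial.C ((-1 : ℤ) ^ S.card) * (- Polynomial.X) ^ codim K n V0 (g S) =
            Polynomial.C ((-1 : ℤ) ^ S.card) * (- Polynomial.X) ^ codim K n V0 X := by
          intro S hS
          rw [(Finset.mem_filter.mp hS).2]
        rw [Finset.sum_congr rfl hinner, ← Finset.sum_mul, ← map_sum]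
        congr 2
        show (∑ S ∈ 𝒞.powerset.filter fun S => g S = X, (-1 : ℤ) ^ S.card) = _
        congr 1
        ext S
        simp only [Finset.mem_filter, Finset.mem_powerset]
        constructor
        · rintro ⟨hS, hgS⟩
          exact ⟨⟨hS, hgS ▸ hXne⟩, hgS⟩
        · rintro ⟨⟨hS, _⟩, hgS⟩
          exact ⟨hS, hgS⟩
    _ = ∑ S ∈ 𝒞.powerset.filter fun S => g S ≠ ∅,
          Polynomial.C ((-1 : ℤ) ^ S.card) * (- Polynomial.X) ^ codim K n V0 (g S) :=
        Finset.sum_fiberwise_of_maps_to hmaps2 _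
    _ = ∑ S ∈ 𝒞.powerset.filter fun S => (V0 ∩ ⋂ H ∈ S, H) ≠ ∅,
          Polynomial.C ((-1 : ℤ) ^ S.card) *
            (- Polynomial.X) ^ codim K n V0 (V0 ∩ ⋂ H ∈ S, H) := rfl

end Mobius

section Restrict
open scoped Classical
variable {K : Type} [Field K] {n : ℕ}

lemma interPoset_restrict (H₀ : Set (Fin n → K)) (𝒜' : Finset (Set (Fin n → K))) :
    interPoset K n H₀ ((𝒜'.image fun H => H ∩ H₀).filter fun X => X ≠ ∅) =
      interPoset K n H₀ 𝒜' := by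
  ext X
  rw [mem_interPoset_iff, mem_interPoset_iff]
  constructor
  · rintro ⟨⟨T, hT, rfl⟩, hne⟩
    refine ⟨⟨𝒜'.filter fun H => H ∩ H₀ ∈ T, Finset.filter_subset _ _, ?_⟩, hne⟩
    ext x
    simp only [Set.mem_inter_iff, Set.mem_iInter, Finset.mem_filter]
    constructor
    · rintro ⟨hx0, hxS⟩
      refine ⟨hx0, fun Z hZ => ?_⟩
      have hZ'' := hT hZ
      rw [Finset.mem_filter, Finset.mem_image] at hZ''
      obtain ⟨⟨H, hH𝒜', rfl⟩, -⟩ := hZ''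
      exact ⟨hxS H ⟨hH𝒜', hZ⟩, hx0⟩
    · rintro ⟨hx0, hxT⟩
      exact ⟨hx0, fun H hH => (hxT (H ∩ H₀) hH.2).1⟩
  · rintro ⟨⟨S', hS', rfl⟩, hne⟩
    refine ⟨⟨S'.image fun H => H ∩ H₀, ?_, ?_⟩, hne⟩
    · intro Z hZ
      rw [Finset.mem_image] at hZ
      obtain ⟨H, hHS', rfl⟩ := hZ
      rw [Finset.mem_filter, Finset.mem_image]
      refine ⟨⟨H, hS' hHS', rfl⟩, ?_⟩
      intro hHempty
      apply hne
      rw [Set.eq_empty_iff_forall_notMem]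
      intro x hx
      have hxH : x ∈ H ∩ H₀ := ⟨Set.mem_iInter₂.mp hx.2 H hHS', hx.1⟩
      rw [hHempty] at hxH
      exact hxH
    · ext x
      simp only [Set.mem_inter_iff, Set.mem_iInter, Finset.mem_image]
      constructor
      · rintro ⟨hx0, hxT⟩
        exact ⟨hx0, fun H hH => (hxT (H ∩ H₀) ⟨H, hH, rfl⟩).1⟩
      · rintro ⟨hx0, hxS⟩
        refine ⟨hx0, fun Z hZ => ?_⟩
        obtain ⟨H, hH, rfl⟩ := hZ
        exact ⟨hxS H hH, hx0⟩

lemma codim_univ_eq' {H₀ : Set (Fin n → K)}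
    (hrep : ∃ a : Fin n → K, ∃ c : K, a ≠ 0 ∧ H₀ = affH a c)
    {Y : Set (Fin n → K)} (hY : Y ⊆ H₀) :
    codim K n Set.univ Y = codim K n H₀ Y + 1 := by
  obtain ⟨a, c, ha, rfl⟩ := hrep
  exact codim_univ_eq ha c hY

end Restrict

open scoped Classical in
/-- Deletion-restriction for Poincaré polynomials:
`π(𝒜,t) = π(𝒜',t) + t·π(𝒜'',t)`, where `𝒜' = 𝒜 \ {H₀}` and `𝒜''` is the
restriction of `𝒜'` to the hyperplane `H₀`. -/
theorem poincare_deletion_restriction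
    (K : Type) [Field K] (n : ℕ)
    (𝒜 : Finset (Set (Fin n → K)))
    (hhyp : ∀ H ∈ 𝒜, ∃ p : MvPolynomial (Fin n) K,
      p.totalDegree = 1 ∧ H = zeroSet K n p)
    (H₀ : Set (Fin n → K)) (hH₀ : H₀ ∈ 𝒜)
    (𝒜' : Finset (Set (Fin n → K))) (h𝒜' : 𝒜' = 𝒜.erase H₀)
    (𝒜'' : Finset (Set (Fin n → K)))
    (h𝒜'' : 𝒜'' = (𝒜'.image fun H => H ∩ H₀).filter fun X => X ≠ ∅)
    (μ μ' μ'' : Set (Fin n → K) → ℤ)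
    (hμ : IsMobius K n Set.univ 𝒜 μ) (hμ' : IsMobius K n Set.univ 𝒜' μ')
    (hμ'' : IsMobius K n H₀ 𝒜'' μ'') :
    poin K n Set.univ 𝒜 μ =
      poin K n Set.univ 𝒜' μ' + Polynomial.X * poin K n H₀ 𝒜'' μ'' := by
  classical
  obtain ⟨a₀, c₀, ha₀, hH₀rep⟩ := exists_affH_repr 𝒜 hhyp hH₀
  have hrepH₀ : ∃ a : Fin n → K, ∃ c : K, a ≠ 0 ∧ H₀ = affH a c := ⟨a₀, c₀, ha₀, hH₀rep⟩
  have hunivne : (Set.univ : Set (Fin n → K)) ≠ ∅ :=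
    (Set.univ_nonempty).ne_empty
  have hH₀ne : H₀ ≠ ∅ := by
    rw [hH₀rep]
    exact (affH_nonempty ha₀ c₀).ne_empty
  have h𝒜'sub : ∀ H ∈ 𝒜', H ∈ 𝒜 := by
    intro H hH
    rw [h𝒜'] at hH
    exact Finset.mem_of_mem_erase hH
  have hns𝒜 : ∀ H ∈ 𝒜, ¬ (Set.univ : Set (Fin n → K)) ⊆ H := by
    intro H hH
    obtain ⟨a, c, ha, rfl⟩ := exists_affH_repr 𝒜 hhyp hH
    exact affH_ne_univ ha c
  have hns𝒜' : ∀ H ∈ 𝒜', ¬ (Set.univ : Set (Fin n → K)) ⊆ H :=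
    fun H hH => hns𝒜 H (h𝒜'sub H hH)
  have hnsH₀ : ∀ H ∈ 𝒜', ¬ H₀ ⊆ H := by
    intro H hH hsub
    have hHne : H ≠ H₀ := by
      rw [h𝒜'] at hH
      exact Finset.ne_of_mem_erase hH
    obtain ⟨a, c, ha, hHrep⟩ := exists_affH_repr 𝒜 hhyp (h𝒜'sub H hH)
    have hrev : H ⊆ H₀ := by
      rw [hHrep, hH₀rep] at hsub ⊢
      exact affH_subset_affH ha₀ ha hsub
    exact hHne (Set.Subset.antisymm hrev hsub)
  have W1 := poin_eq_whitney (V0 := Set.univ) hunivne (ℬ := 𝒜) (𝒞 := 𝒜) rfl hns𝒜 hμ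
  have W2 := poin_eq_whitney (V0 := Set.univ) hunivne (ℬ := 𝒜') (𝒞 := 𝒜') rfl hns𝒜' hμ'
  have W3 := poin_eq_whitney (V0 := H₀) hH₀ne (ℬ := 𝒜'') (𝒞 := 𝒜')
      (by rw [h𝒜'']; exact interPoset_restrict H₀ 𝒜') hnsH₀ hμ''
  rw [W1, W2, W3]
  rw [← Finset.sum_filter_add_sum_filter_not
    (𝒜.powerset.filter fun S => (Set.univ ∩ ⋂ H ∈ S, H) ≠ ∅) (fun S => H₀ ∈ S)
    (fun S => Polynomial.C ((-1 : ℤ) ^ S.card) *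
      (- Polynomial.X) ^ codim K n Set.univ (Set.univ ∩ ⋂ H ∈ S, H))]
  have hins : ∀ S' : Finset (Set (Fin n → K)),
      Set.univ ∩ ⋂ H ∈ insert H₀ S', H = H₀ ∩ ⋂ H ∈ S', H := by
    intro S'
    rw [Finset.set_biInter_insert, Set.univ_inter]
  have hH₀notmem' : ∀ S' : Finset (Set (Fin n → K)), S' ⊆ 𝒜' → H₀ ∉ S' := by
    intro S' hS' hmem
    have := hS' hmem
    rw [h𝒜'] at this
    exact Finset.notMem_erase H₀ 𝒜 this
  have e1 : ((𝒜.powerset.filter fun S => (Set.univ ∩ ⋂ H ∈ S, H) ≠ ∅).filter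
        fun S => ¬ H₀ ∈ S) =
      𝒜'.powerset.filter fun S => (Set.univ ∩ ⋂ H ∈ S, H) ≠ ∅ := by
    ext S
    simp only [Finset.mem_filter, Finset.mem_powerset, h𝒜', Finset.subset_erase]
    tauto
  have e2 : (∑ S ∈ (𝒜.powerset.filter fun S => (Set.univ ∩ ⋂ H ∈ S, H) ≠ ∅).filter
        fun S => H₀ ∈ S,
        Polynomial.C ((-1 : ℤ) ^ S.card) *
          (- Polynomial.X) ^ codim K n Set.univ (Set.univ ∩ ⋂ H ∈ S, H)) =
      Polynomial.X * ∑ S ∈ 𝒜'.powerset.filter fun S => (H₀ ∩ ⋂ H ∈ S, H) ≠ ∅,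
        Polynomial.C ((-1 : ℤ) ^ S.card) *
          (- Polynomial.X) ^ codim K n H₀ (H₀ ∩ ⋂ H ∈ S, H) := by
    rw [Finset.mul_sum]
    refine Finset.sum_bij' (fun S _ => S.erase H₀) (fun S' _ => insert H₀ S') ?_ ?_ ?_ ?_ ?_
    · intro S hS
      rw [Finset.mem_filter, Finset.mem_filter, Finset.mem_powerset] at hS
      obtain ⟨⟨hS𝒜, hSne⟩, hH₀S⟩ := hS
      rw [Finset.mem_filter, Finset.mem_powerset]
      constructor
      · rw [h𝒜']
        exact Finset.erase_subset_erase H₀ hS𝒜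
      · rw [← hins, Finset.insert_erase hH₀S]
        exact hSne
    · intro S' hS'
      rw [Finset.mem_filter, Finset.mem_powerset] at hS'
      obtain ⟨hS'𝒜', hS'ne⟩ := hS'
      rw [Finset.mem_filter, Finset.mem_filter, Finset.mem_powerset]
      refine ⟨⟨?_, ?_⟩, Finset.mem_insert_self H₀ S'⟩
      · intro H hH
        rw [Finset.mem_insert] at hH
        rcases hH with rfl | hH
        · exact hH₀
        · exact h𝒜'sub H (hS'𝒜' hH)
      · rw [hins]
        exact hS'ne
    · intro S hS
      rw [Finset.mem_filter] at hS
      exact Finset.insert_erase hS.2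
    · intro S' hS'
      rw [Finset.mem_filter, Finset.mem_powerset] at hS'
      exact Finset.erase_insert (hH₀notmem' S' hS'.1)
    · intro S hS
      rw [Finset.mem_filter, Finset.mem_filter, Finset.mem_powerset] at hS
      obtain ⟨⟨hS𝒜, hSne⟩, hH₀S⟩ := hS
      have hcard : S.card = (S.erase H₀).card + 1 := by
        rw [Finset.card_erase_of_mem hH₀S]
        have := Finset.card_pos.mpr ⟨H₀, hH₀S⟩
        omega
      have hseteq : Set.univ ∩ ⋂ H ∈ S, H = H₀ ∩ ⋂ H ∈ S.erase H₀, H := by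
        rw [← hins, Finset.insert_erase hH₀S]
      have hsubH₀ : (H₀ ∩ ⋂ H ∈ S.erase H₀, H) ⊆ H₀ := Set.inter_subset_left
      have hcodim := codim_univ_eq' hrepH₀ hsubH₀
      rw [hseteq, hcard, hcodim, pow_succ, pow_succ, map_mul]
      simp only [map_neg, map_one]
      ring
  rw [e1, e2]
  ring
end
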